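/- Let n ≥ 1 and for each i : Fin n let α i be a nonempty finite type and τ i a matrix in Matrix (α i) (α i) ℂ. Then the trace norm of the n-fold tensor product satisfies ‖⨂_i τ i‖₁ = ∏ i, ‖τ i‖₁. -/

import Mathlib

open Matrix BigOperators
open scoped ComplexOrder

/-- The `n`-fold tensor (Kronecker) product of matrices `M i : Matrix (α i) (α i) ℂ`,
indexed by `Π i, α i`, with entries `∏ i, M i (x i) (y i)`. -/
def tensorPow {n : ℕ} {α : Fin n → Type*} [∀ i, Fintype (α i)]
    (M : ∀ i, Matrix (α i) (α i) ℂ) : Matrix (∀ i, α i) (∀ i, α i) ℂ :=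
  Matrix.of fun x y => ∏ i, M i (x i) (y i)

/-- The trace norm of a square complex matrix: the trace of the positive semidefinite
square root of `Aᴴ * A`. -/
noncomputable def traceNorm {α : Type*} [Fintype α] [DecidableEq α]
    (A : Matrix α α ℂ) : ℝ :=
  (((Matrix.posSemidef_conjTranspose_mul_self A).1.eigenvectorUnitary : Matrix α α ℂ) *
      diagonal (((↑) : ℝ → ℂ) ∘ Real.sqrt ∘ (Matrix.posSemidef_conjTranspose_mul_self A).1.eigenvalues) *
      (star (Matrix.posSemidef_conjTranspose_mul_self A).1.eigenvectorUnitary : Matrix α α ℂ)).trace.re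

open scoped MatrixOrder

lemma traceNorm_eq_sqrt {α : Type*} [Fintype α] [DecidableEq α] (A : Matrix α α ℂ) :
    traceNorm A = (CFC.sqrt (Aᴴ * A)).trace.re := by
  have hA := Matrix.posSemidef_conjTranspose_mul_self A
  rw [CFC.sqrt_eq_cfc, cfc_nnreal_eq_real _ _ hA.nonneg, hA.1.cfc_eq, IsHermitian.cfc,
    Unitary.conjStarAlgAut_apply, traceNorm]
  congr 4
  ext i j
  simp only [diagonal_apply]
  split_ifs with h
  · subst h
    simp [max_eq_left (hA.eigenvalues_nonneg i)]
  · rfl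

lemma tensorPow_mul {n : ℕ} {α : Fin n → Type*} [∀ i, Fintype (α i)]
    (M N : ∀ i, Matrix (α i) (α i) ℂ) :
    tensorPow M * tensorPow N = tensorPow fun i => M i * N i := by
  ext x y
  simp only [tensorPow, Matrix.mul_apply, Matrix.of_apply]
  rw [Fintype.prod_sum fun i j => M i (x i) j * N i j (y i)]
  simp [Finset.prod_mul_distrib]

lemma tensorPow_conjTranspose {n : ℕ} {α : Fin n → Type*} [∀ i, Fintype (α i)]
    (M : ∀ i, Matrix (α i) (α i) ℂ) :
    (tensorPow M)ᴴ = tensorPow fun i => (M i)ᴴ := by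
  ext x y
  simp [tensorPow, Matrix.conjTranspose_apply]

lemma tensorPow_posSemidef {n : ℕ} {α : Fin n → Type*} [∀ i, Fintype (α i)]
    {M : ∀ i, Matrix (α i) (α i) ℂ} (hM : ∀ i, (M i).PosSemidef) :
    (tensorPow M).PosSemidef := by
  classical
  choose B hB using fun i => CStarAlgebra.nonneg_iff_eq_star_mul_self.mp (hM i).nonneg
  rw [← Matrix.nonneg_iff_posSemidef, CStarAlgebra.nonneg_iff_eq_star_mul_self]
  refine ⟨tensorPow B, ?_⟩
  rw [star_eq_conjTranspose, tensorPow_conjTranspose, tensorPow_mul]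
  exact congrArg tensorPow (funext hB)

lemma tensorPow_trace {n : ℕ} {α : Fin n → Type*} [∀ i, Fintype (α i)]
    (M : ∀ i, Matrix (α i) (α i) ℂ) :
    (tensorPow M).trace = ∏ i, (M i).trace := by
  classical
  simp only [Matrix.trace, Matrix.diag, tensorPow, Matrix.of_apply]
  rw [Fintype.prod_sum fun i j => M i j j]

lemma trace_eq_re {α : Type*} [Fintype α] {A : Matrix α α ℂ}
    (hA : A.IsHermitian) : A.trace = (A.trace.re : ℂ) := by
  have h : star A.trace = A.trace := by
    rw [← Matrix.trace_conjTranspose, hA.eq]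
  exact (Complex.conj_eq_iff_re.mp h).symm

theorem stmt1 {n : ℕ} (hn : 1 ≤ n) (α : Fin n → Type*) [∀ i, Fintype (α i)]
    [∀ i, DecidableEq (α i)] [∀ i, Nonempty (α i)]
    (τ : ∀ i, Matrix (α i) (α i) ℂ) :
    traceNorm (tensorPow τ) = ∏ i, traceNorm (τ i) := by
  classical
  set S : ∀ i, Matrix (α i) (α i) ℂ :=
    fun i => CFC.sqrt ((τ i)ᴴ * τ i) with hS
  have hSpsd : ∀ i, (S i).PosSemidef :=
    fun i => (CFC.sqrt_nonneg _).posSemidef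
  have hTpsd : (tensorPow S).PosSemidef := tensorPow_posSemidef hSpsd
  have hsq : (tensorPow S) ^ 2 = (tensorPow τ)ᴴ * tensorPow τ := by
    rw [pow_two, tensorPow_mul, tensorPow_conjTranspose, tensorPow_mul]
    refine congrArg tensorPow (funext fun i => ?_)
    rw [hS, ← pow_two, CFC.sq_sqrt _ (Matrix.posSemidef_conjTranspose_mul_self (τ i)).nonneg]
  have key : CFC.sqrt ((tensorPow τ)ᴴ * tensorPow τ) = tensorPow S :=
    (CFC.sqrt_eq_iff _ _ (Matrix.posSemidef_conjTranspose_mul_self _).nonneg hTpsd.nonneg).mpr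
      (by rw [← pow_two, hsq])
  rw [traceNorm_eq_sqrt, key, tensorPow_trace]
  have : ∀ i, (S i).trace = (((S i).trace.re : ℝ) : ℂ) :=
    fun i => trace_eq_re (hSpsd i).1
  rw [show (∏ i, (S i).trace) = (((∏ i, (S i).trace.re : ℝ)) : ℂ) by
    rw [Complex.ofReal_prod]; exact Finset.prod_congr rfl fun i _ => this i]
  rw [Complex.ofReal_re]; exact Finset.prod_congr rfl fun i _ => (traceNorm_eq_sqrt (τ i)).symm
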